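/- Let j be a primitive cube root of unity. In any j-differential calculus on the plane with df = dx f_x + dy f_y, where x dy = dy x and y dx = dx y, applying d yields dx dy − j dy dx = d²y·x − x·d²y and dy dx − j dx dy = d²x·y − y·d²x; if moreover both x commutes with d²y and y commutes with d²x, then dx dy = j dy dx and dy dx = j dx dy, which forces (1 − j²) dx dy = 0, and since j² ≠ 1, dx dy = 0 and dy dx = 0. -/
import Mathlib


theorem stmt_13 (j : ℂ) (hj3 : j ^ 3 = 1) (hj1 : j ≠ 1)
    (Ω : Type*) [Ring Ω] [Algebra ℂ Ω]
    (H : Ω → ℤ → Prop)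
    (d : Ω →ₗ[ℂ] Ω)
    (hdH : ∀ ω i, H ω i → H (d ω) (i + 1))
    (hmulH : ∀ ω η i k, H ω i → H η k → H (ω * η) (i + k))
    (hLeib : ∀ (ω η : Ω) (i : ℤ), H ω i → d (ω * η) = d ω * η + j ^ i • (ω * d η))
    (x y : Ω) (hx : H x 0) (hy : H y 0)
    (hxy : x * d y = d y * x) (hyx : y * d x = d x * y) :
    (d x * d y - j • (d y * d x) = d (d y) * x - x * d (d y)) ∧
    (d y * d x - j • (d x * d y) = d (d x) * y - y * d (d x)) ∧
    ((x * d (d y) = d (d y) * x ∧ y * d (d x) = d (d x) * y) →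
      d x * d y = 0 ∧ d y * d x = 0) := by
  have hj2 : j ^ 2 ≠ 1 := by
    intro h
    apply hj1
    have : j ^ 3 = j * j ^ 2 := by ring
    rw [h, mul_one] at this
    rw [← this, hj3]
  have hdx1 : H (d x) 1 := by simpa using hdH x 0 hx
  have hdy1 : H (d y) 1 := by simpa using hdH y 0 hy
  have e1 : d x * d y + x * d (d y) = d (d y) * x + j • (d y * d x) := by
    have h1 := hLeib x (d y) 0 hx
    have h2 := hLeib (d y) x 1 hdy1
    simp only [zpow_zero, one_smul, zpow_one] at h1 h2
    rw [← h1, ← h2, hxy]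
  have e2 : d y * d x + y * d (d x) = d (d x) * y + j • (d x * d y) := by
    have h1 := hLeib y (d x) 0 hy
    have h2 := hLeib (d x) y 1 hdx1
    simp only [zpow_zero, one_smul, zpow_one] at h1 h2
    rw [← h1, ← h2, hyx]
  have P1 : d x * d y - j • (d y * d x) = d (d y) * x - x * d (d y) := by
    have := e1; linear_combination (norm := module) this
  have P2 : d y * d x - j • (d x * d y) = d (d x) * y - y * d (d x) := by
    have := e2; linear_combination (norm := module) this
  refine ⟨P1, P2, ?_⟩
  rintro ⟨c1, c2⟩
  have q1 : d x * d y = j • (d y * d x) := by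
    have h : d x * d y - j • (d y * d x) = 0 := by rw [P1, c1, sub_self]
    exact sub_eq_zero.mp h
  have q2 : d y * d x = j • (d x * d y) := by
    have h : d y * d x - j • (d x * d y) = 0 := by rw [P2, c2, sub_self]
    exact sub_eq_zero.mp h
  have key : (1 - j ^ 2) • (d x * d y) = 0 := by
    have : d x * d y = (j ^ 2) • (d x * d y) := by
      conv_lhs => rw [q1, q2, smul_smul, ← sq]
    rw [sub_smul, one_smul, ← this, sub_self]
  have hne : (1 - j ^ 2) ≠ 0 := fun h => hj2 (by linear_combination -h)
  have hz : d x * d y = 0 := by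
    have := congrArg (fun v => (1 - j ^ 2)⁻¹ • v) key
    simpa [smul_smul, inv_mul_cancel₀ hne] using this
  exact ⟨hz, by rw [q2, hz, smul_zero]⟩
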